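/- Let I = (y₁, y₂) be the ideal of k[y₁,y₂,y₃,y₄] generated by y₁ and y₂, and suppose f, g ∈ I³. Then the Jacobian determinant of the map ρ: (y₁,y₂,y₃,y₄) ↦ (y₁ - f, y₂ + y₁(y₁y₄-y₂y₃) - g, y₃, y₄) is congruent to 1 - y₁y₃ modulo I². In particular det(Jρ) is not a nonzero constant, so ρ is not a polynomial automorphism of k⁴. -/

import Mathlib

open MvPolynomial

private lemma pderiv_mem_pow' {k : Type*} [CommRing k] (I : Ideal (MvPolynomial (Fin 4) k))
    (i : Fin 4) :
    ∀ n : ℕ, ∀ p ∈ I ^ (n + 1), pderiv i p ∈ I ^ n := by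
  intro n
  induction n with
  | zero => intro p hp; simp [Ideal.one_eq_top]
  | succ n ih =>
    intro p hp
    rw [pow_succ] at hp
    refine Submodule.mul_induction_on hp (fun a ha b hb => ?_) (fun x y hx hy => ?_)
    · rw [pderiv_mul]
      refine add_mem ?_ (Ideal.mul_mem_right _ _ ha)
      rw [pow_succ]
      exact Ideal.mul_mem_mul (ih a ha) hb
    · simpa [map_add] using add_mem hx hy

private lemma chain_rule' {k : Type*} [CommRing k] (g : Fin 4 → MvPolynomial (Fin 4) k)
    (i : Fin 4) (p : MvPolynomial (Fin 4) k) :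
    pderiv i (aeval g p) = ∑ j, aeval g (pderiv j p) * pderiv i (g j) := by
  induction p using MvPolynomial.induction_on with
  | C a => simp
  | add p q hp hq => simp only [map_add, hp, hq, add_mul, Finset.sum_add_distrib]
  | mul_X p n hp =>
    simp only [map_mul, aeval_X, pderiv_mul, map_add, add_mul, Finset.sum_add_distrib, hp]
    fin_cases n <;>
      simp [Fin.sum_univ_four, pderiv_X_self, pderiv_X_of_ne, Finset.mul_sum] <;> ring

/-- The determinant of the Jacobian matrix of `ρ`, computed explicitly. -/
private lemma det_formula {k : Type*} [CommRing k] (f g : MvPolynomial (Fin 4) k) :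
    Matrix.det (Matrix.of fun i j => pderiv j
        ((![X 0 - f, X 1 + X 0 * (X 0 * X 3 - X 1 * X 2) - g, X 2, X 3] :
          Fin 4 → MvPolynomial (Fin 4) k) i))
      = 1 - X 0 * X 2 +
        (pderiv 1 f * (2 * X 0 * X 3 - X 1 * X 2 - pderiv 0 g)
          - pderiv 0 f * (1 - X 0 * X 2 - pderiv 1 g) - pderiv 1 g) := by
  simp [Matrix.det_succ_row_zero, Fin.sum_univ_succ, pderiv_mul, pderiv_X_self,
    pderiv_X_of_ne, Pi.single_apply, Fin.succAbove, Fin.succ]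
  ring

/-- Image of an element of `I²` under `aeval ![X, 0, 1, 0]` lies in `(X²)`. -/
private lemma psi_mem {k : Type*} [Field k] {e : MvPolynomial (Fin 4) k}
    (he : e ∈ (Ideal.span ({X 0, X 1} : Set (MvPolynomial (Fin 4) k))) ^ 2) :
    (aeval ![Polynomial.X, 0, 1, 0] : MvPolynomial (Fin 4) k →ₐ[k] Polynomial k) e ∈
      Ideal.span ({Polynomial.X ^ 2} : Set (Polynomial k)) := by
  set ψ := (aeval ![Polynomial.X, 0, 1, 0] : MvPolynomial (Fin 4) k →ₐ[k] Polynomial k)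
  have h1 : (Ideal.span ({X 0, X 1} : Set (MvPolynomial (Fin 4) k))).map ψ.toRingHom ≤
      Ideal.span ({Polynomial.X} : Set (Polynomial k)) := by
    rw [Ideal.map_le_iff_le_comap, Ideal.span_le]
    rintro x (rfl | rfl) <;>
      simp [ψ, Ideal.mem_span_singleton, Ideal.mem_comap]
  have h2 : ψ e ∈ ((Ideal.span ({X 0, X 1} : Set (MvPolynomial (Fin 4) k))).map ψ.toRingHom) ^ 2 := by
    rw [← Ideal.map_pow]
    exact Ideal.mem_map_of_mem _ he
  have h3 := Ideal.pow_right_mono h1 2 h2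
  rwa [Ideal.span_singleton_pow] at h3

/-- key nonconstancy lemma: `1 - X₀X₂ + e` with `e ∈ I²` has `ψ`-image with coefficient `-1`
at degree 1, hence is neither constant nor a unit. -/
private lemma psi_coeff {k : Type*} [Field k] {e : MvPolynomial (Fin 4) k}
    (he : e ∈ (Ideal.span ({X 0, X 1} : Set (MvPolynomial (Fin 4) k))) ^ 2) :
    Polynomial.coeff
      ((aeval ![Polynomial.X, 0, 1, 0] : MvPolynomial (Fin 4) k →ₐ[k] Polynomial k)
        (1 - X 0 * X 2 + e)) 1 = -1 := by
  obtain ⟨b, hb⟩ := Ideal.mem_span_singleton'.1 (psi_mem he)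
  rw [map_add, map_sub, map_one, map_mul, aeval_X, aeval_X, ← hb]
  simp [Polynomial.coeff_mul_X_pow', Polynomial.coeff_one]

private lemma not_const_not_unit {k : Type*} [Field k] {d e : MvPolynomial (Fin 4) k}
    (he : e ∈ (Ideal.span ({X 0, X 1} : Set (MvPolynomial (Fin 4) k))) ^ 2)
    (hd : d = 1 - X 0 * X 2 + e) :
    (∀ c : k, d ≠ C c) ∧ ¬ IsUnit d := by
  set ψ := (aeval ![Polynomial.X, 0, 1, 0] : MvPolynomial (Fin 4) k →ₐ[k] Polynomial k)
  have key : Polynomial.coeff (ψ d) 1 = -1 := by rw [hd]; exact psi_coeff he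
  constructor
  · intro c hc
    rw [hc] at key
    simp [ψ, Polynomial.coeff_C] at key
  · intro hu
    obtain ⟨r, -, hr⟩ := Polynomial.isUnit_iff.1 (hu.map ψ)
    rw [← hr] at key
    simp [Polynomial.coeff_C] at key

/-- if `f, g ∈ I³` with `I = (y₁,y₂)`, then the Jacobian determinant of
`ρ : (y₁,y₂,y₃,y₄) ↦ (y₁-f, y₂+y₁(y₁y₄-y₂y₃)-g, y₃, y₄)` is congruent to `1 - y₁y₃`
modulo `I²`; in particular it is not constant, and `ρ` is not an automorphism. -/
theorem rho_jacobian_not_constant (k : Type*) [Field k] [CharZero k]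
    (f g : MvPolynomial (Fin 4) k)
    (hf : f ∈ (Ideal.span ({X 0, X 1} : Set (MvPolynomial (Fin 4) k))) ^ 3)
    (hg : g ∈ (Ideal.span ({X 0, X 1} : Set (MvPolynomial (Fin 4) k))) ^ 3) :
    (Matrix.det (Matrix.of fun i j => pderiv j
        ((![X 0 - f, X 1 + X 0 * (X 0 * X 3 - X 1 * X 2) - g, X 2, X 3] :
          Fin 4 → MvPolynomial (Fin 4) k) i))
      - (1 - X 0 * X 2))
      ∈ (Ideal.span ({X 0, X 1} : Set (MvPolynomial (Fin 4) k))) ^ 2 ∧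
    (∀ c : k, Matrix.det (Matrix.of fun i j => pderiv j
        ((![X 0 - f, X 1 + X 0 * (X 0 * X 3 - X 1 * X 2) - g, X 2, X 3] :
          Fin 4 → MvPolynomial (Fin 4) k) i)) ≠ C c) ∧
    ¬ ∃ σ : MvPolynomial (Fin 4) k →ₐ[k] MvPolynomial (Fin 4) k,
        (aeval ![X 0 - f, X 1 + X 0 * (X 0 * X 3 - X 1 * X 2) - g, X 2, X 3] :
          MvPolynomial (Fin 4) k →ₐ[k] MvPolynomial (Fin 4) k).comp σ =
            AlgHom.id k (MvPolynomial (Fin 4) k) ∧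
        σ.comp (aeval ![X 0 - f, X 1 + X 0 * (X 0 * X 3 - X 1 * X 2) - g, X 2, X 3]) =
            AlgHom.id k (MvPolynomial (Fin 4) k) := by
  set I : Ideal (MvPolynomial (Fin 4) k) :=
    Ideal.span ({X 0, X 1} : Set (MvPolynomial (Fin 4) k)) with hI
  set ρv : Fin 4 → MvPolynomial (Fin 4) k :=
    ![X 0 - f, X 1 + X 0 * (X 0 * X 3 - X 1 * X 2) - g, X 2, X 3] with hρv
  set M : Matrix (Fin 4) (Fin 4) (MvPolynomial (Fin 4) k) :=
    Matrix.of fun i j => pderiv j (ρv i) with hM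
  set E : MvPolynomial (Fin 4) k :=
    pderiv 1 f * (2 * X 0 * X 3 - X 1 * X 2 - pderiv 0 g)
      - pderiv 0 f * (1 - X 0 * X 2 - pderiv 1 g) - pderiv 1 g with hE
  have hdet : M.det = 1 - X 0 * X 2 + E := det_formula f g
  have hEI : E ∈ I ^ 2 := by
    have h0f : pderiv 0 f ∈ I ^ 2 := pderiv_mem_pow' I 0 2 f hf
    have h1f : pderiv 1 f ∈ I ^ 2 := pderiv_mem_pow' I 1 2 f hf
    have h0g : pderiv 0 g ∈ I ^ 2 := pderiv_mem_pow' I 0 2 g hg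
    have h1g : pderiv 1 g ∈ I ^ 2 := pderiv_mem_pow' I 1 2 g hg
    exact Ideal.sub_mem _ (Ideal.sub_mem _ (Ideal.mul_mem_right _ _ h1f)
      (Ideal.mul_mem_right _ _ h0f)) h1g
  obtain ⟨hnc, hnu⟩ := not_const_not_unit (d := M.det) hEI hdet
  refine ⟨?_, hnc, ?_⟩
  · rw [hdet]
    have h : 1 - X 0 * X 2 + E - (1 - X 0 * X 2) = E := by ring
    rw [h]; exact hEI
  · rintro ⟨σ, h1, h2⟩
    apply hnu
    -- chain rule: the Jacobian of `σ` (pushed through `aeval ρv`) is a left inverse of `M`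
    set A : Matrix (Fin 4) (Fin 4) (MvPolynomial (Fin 4) k) :=
      Matrix.of fun l j => aeval ρv (pderiv j (σ (X l))) with hA
    have hAM : A * M = 1 := by
      ext l i
      have hXl : aeval ρv (σ (X l)) = X l := DFunLike.congr_fun h1 (X l)
      have := chain_rule' ρv i (σ (X l))
      rw [hXl] at this
      rw [Matrix.mul_apply]
      simp only [hA, hM, Matrix.of_apply]
      rw [← this]
      classical
      rw [pderiv_X, Matrix.one_apply, Pi.single_apply]
    have hdetmul : A.det * M.det = 1 := by
      rw [← Matrix.det_mul, hAM, Matrix.det_one]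
    exact IsUnit.of_mul_eq_one _ ((mul_comm A.det M.det) ▸ hdetmul)
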